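/- For each identifier oid ∈ OId, the object-specific residual residual₁(D, oid) = reach(D ↾ Σ(P^S_Σ ⇓ oid)) is equivalent to the original DATE D with respect to the set of ground traces of oid in the program: residual₁(D, oid) ≅_{P^S_Σ ⇓ oid} D. -/

import Mathlib

open Classical

/-- A property automaton over states `Q` and alphabet `E`: a deterministic and
total transition relation is represented as a transition function. -/
structure PA (Q : Type*) (E : Type*) where
  init : Q
  bad : Set Q
  next : Q → E → Q

namespace PA

variable {Q E : Type*}

/-- Iterated application of the transition function along a ground trace. -/
def run (π : PA Q E) (q : Q) (t : List E) : Q := t.foldl π.next q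

/-- A ground trace satisfies a property automaton iff no prefix of it leads
from the initial state to a bad state. -/
def Sat (t : List E) (π : PA Q E) : Prop :=
  ∀ t' : List E, t' <+: t → π.run π.init t' ∉ π.bad

/-- Equivalence of two property automata with respect to a set of ground traces. -/
def EquivOn (T : Set (List E)) (π π' : PA Q E) : Prop :=
  ∀ t ∈ T, Sat t π ↔ Sat t π'

end PA

/-- A static program: a set of static parametrised traces over identifiers `α`,
together with a must-alias equivalence relation and a may-alias relation. -/
structure SProg (α : Type*) (E : Type*) where
  traces : Set (List (α × E))
  must : α → α → Prop
  may : α → α → Prop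
  must_equiv : Equivalence must
  must_sub_may : ∀ {x y : α}, must x y → may x y

namespace SProg

variable {α E : Type*}

-- Projection of a static parametrised trace onto an identifier `x`,
-- yielding the set of possible ground traces.
open Classical in
noncomputable def proj (P : SProg α E) (x : α) : List (α × E) → Set (List E)
  | [] => {[]}
  | (x', e) :: st =>
      if P.must x x' then (e :: ·) '' P.proj x st
      else if P.may x x' then P.proj x st ∪ (e :: ·) '' P.proj x st
      else P.proj x st

/-- The projection of a static program onto a single identifier. -/
def projId (P : SProg α E) (x : α) : Set (List E) :=
  {t | ∃ st ∈ P.traces, t ∈ P.proj x st}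

/-- The projection of a static program onto all identifiers (`P ⇓ OId`). -/
def projAll (P : SProg α E) : Set (List E) :=
  {t | ∃ st ∈ P.traces, ∃ x : α, t ∈ P.proj x st}

end SProg

/-- Satisfaction of a property automaton by a static parametrised trace:
every projection onto every identifier satisfies the automaton. -/
def PA.SSat {α Q E : Type*} (P : SProg α E) (st : List (α × E)) (π : PA Q E) : Prop :=
  ∀ x : α, ∀ t ∈ P.proj x st, PA.Sat t π

/-- Equivalence of two property automata with respect to a static program. -/
def PA.SEquiv {α Q E : Type*} (P : SProg α E) (π π' : PA Q E) : Prop :=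
  ∀ st ∈ P.traces, PA.SSat P st π ↔ PA.SSat P st π'

/-- A transition of a DATE: source state, event, condition, action, target state. -/
structure DTrans (Q : Type*) (E : Type*) (Θ : Type*) where
  src : Q
  ev : E
  cond : Θ → Bool
  act : Θ → Θ
  tgt : Q

/-- A DATE (without timers/channels): states `Q`, events `E`, monitoring
variable states `Θ`, initial state, initial monitoring state, bad states,
and a transition relation. -/
structure DATE (Q : Type*) (E : Type*) (Θ : Type*) where
  init : Q
  th0 : Θ
  bad : Set Q
  delta : Set (DTrans Q E Θ)

namespace DATE

variable {Q E Θ : Type*}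

/-- Determinism: from each state, any two distinct transitions with the same
event have conditions that are never simultaneously true. -/
def Deterministic (D : DATE Q E Θ) : Prop :=
  ∀ d ∈ D.delta, ∀ d' ∈ D.delta,
    d.src = d'.src → d.ev = d'.ev → d ≠ d' →
      ∀ θ : Θ, ¬(d.cond θ = true ∧ d'.cond θ = true)

/-- The concrete transition function `Δ`. -/
noncomputable def step (D : DATE Q E Θ) (s : Q × Θ) (e : E) : Q × Θ :=
  if h : ∃ d ∈ D.delta, d.src = s.1 ∧ d.ev = e ∧ d.cond s.2 = true
  then (h.choose.tgt, h.choose.act s.2)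
  else s

/-- `Δ*`: iterated concrete transition function along a ground trace. -/
noncomputable def run (D : DATE Q E Θ) (s : Q × Θ) (t : List E) : Q × Θ :=
  t.foldl D.step s

/-- A ground trace satisfies a DATE iff no prefix of it drives `Δ*` from the
initial configuration into a bad state. -/
def Sat (t : List E) (D : DATE Q E Θ) : Prop :=
  ∀ t' : List E, t' <+: t → (D.run (D.init, D.th0) t').1 ∉ D.bad

/-- Equivalence of two DATEs with respect to a set of ground traces. -/
def EquivOn (T : Set (List E)) (D D' : DATE Q E Θ) : Prop :=
  ∀ t ∈ T, Sat t D ↔ Sat t D'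

/-- The static transition relation `q →e_approx q'`. -/
def ApproxStep (D : DATE Q E Θ) (q : Q) (e : E) (q' : Q) : Prop :=
  (∃ d ∈ D.delta, d.src = q ∧ d.ev = e ∧ d.tgt = q' ∧ ¬ ∀ θ : Θ, d.cond θ = false)
  ∨ (q' = q ∧ ¬ ∃ d ∈ D.delta, d.src = q ∧ d.ev = e ∧ d.tgt ≠ q ∧ ∀ θ : Θ, d.cond θ = true)

/-- The static transition function on sets of states. -/
def approxSet (D : DATE Q E Θ) (S : Set Q) (e : E) : Set Q :=
  {q' | ∃ q ∈ S, D.ApproxStep q e q'}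

/-- `approxΔ*`: iterated static transition function along a ground trace. -/
def approxRun (D : DATE Q E Θ) (S : Set Q) (t : List E) : Set Q :=
  t.foldl D.approxSet S

/-- `q ↪ q'`: `q'` is reachable from `q` via the static transition relation. -/
def Reach (D : DATE Q E Θ) (q q' : Q) : Prop :=
  ∃ t : List E, q' ∈ D.approxRun {q} t

/-- `badAfter(q)`: `q` is reachable from the initial state and can reach a bad state. -/
def BadAfter (D : DATE Q E Θ) (q : Q) : Prop :=
  D.Reach D.init q ∧ ∃ q' ∈ D.bad, D.Reach q q'

/-- `goodEntryPoint(q)`. -/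
def GoodEntryPoint (D : DATE Q E Θ) (q : Q) : Prop :=
  ¬ D.BadAfter q ∧ ∃ q' : Q, ∃ e : E, D.BadAfter q' ∧ D.ApproxStep q' e q

/-- `useful(q)`. -/
def Useful (D : DATE Q E Θ) (q : Q) : Prop :=
  D.BadAfter q ∨ D.GoodEntryPoint q

/-- Restriction of a DATE to a set of transitions (`D ↾ δ'`). -/
def restrict (D : DATE Q E Θ) (δ' : Set (DTrans Q E Θ)) : DATE Q E Θ :=
  { D with delta := D.delta ∩ δ' }

/-- The reachability-reduced DATE `reach(D)`: only useful states and
transitions between useful states are kept. -/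
def reachReduce (D : DATE Q E Θ) : DATE Q E Θ :=
  D.restrict {d | D.Useful d.src ∧ D.Useful d.tgt}

/-- Alphabet restriction `D ↾ Σ'`. -/
def alphaRestrict (D : DATE Q E Θ) (A : Set E) : DATE Q E Θ :=
  D.restrict {d | d.ev ∈ A}

/-- `Σ(T)`: the set of events occurring in some trace of `T`. -/
def eventsOf (T : Set (List E)) : Set E :=
  {e | ∃ t ∈ T, e ∈ t}

/-- Component-wise union of two DATEs (sharing initial state and initial
monitoring state). -/
def union (D₁ D₂ : DATE Q E Θ) : DATE Q E Θ :=
  { init := D₁.init, th0 := D₁.th0, bad := D₁.bad ∪ D₂.bad,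
    delta := D₁.delta ∪ D₂.delta }

/-- Component-wise union of a family of DATEs, with given initial state and
initial monitoring state. -/
def unionFamily {ι : Type*} (q0 : Q) (θ0 : Θ) (f : ι → DATE Q E Θ) : DATE Q E Θ :=
  { init := q0, th0 := θ0, bad := ⋃ i, (f i).bad, delta := ⋃ i, (f i).delta }

/-- A ground trace `t` uses a transition `d`. -/
def Uses (D : DATE Q E Θ) (t : List E) (d : DTrans Q E Θ) : Prop :=
  (¬ ∀ θ : Θ, d.cond θ = false) ∧
    ∃ t' : List E, (t' ++ [d.ev]) <+: t ∧ d.src ∈ D.approxRun {D.init} t'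

/-- Satisfaction of a DATE by a static parametrised trace. -/
def SSat {α : Type*} (P : SProg α E) (st : List (α × E)) (D : DATE Q E Θ) : Prop :=
  ∀ x : α, ∀ t ∈ P.proj x st, Sat t D

/-- Equivalence of two DATEs with respect to a static program. -/
def SEquiv {α : Type*} (P : SProg α E) (D D' : DATE Q E Θ) : Prop :=
  ∀ st ∈ P.traces, SSat P st D ↔ SSat P st D'

end DATE

/-- Translation of a property automaton into a DATE with `Θ = Unit`:
each transition `(q, e, q')` becomes `q —e|true↦skip→ q'`. -/
def PA.toDATE {Q E : Type*} (π : PA Q E) : DATE Q E Unit :=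
  { init := π.init, th0 := (), bad := π.bad,
    delta := {d | d.cond = (fun _ => true) ∧ d.act = id ∧ d.tgt = π.next d.src d.ev} }

/-- The flow-sensitive residual `residual₂(D, P)`. -/
def DATE.residual2 {α Q E Θ : Type*} (D : DATE Q E Θ) (P : SProg α E) : DATE Q E Θ :=
  (D.restrict {d | ∃ t ∈ P.projAll, D.Uses t d}).reachReduce

/-- Consecutive application of the flow-sensitive residual over a list of
static program over-approximations. -/
def DATE.residual2List {α Q E Θ : Type*} (D : DATE Q E Θ) :
    List (SProg α E) → DATE Q E Θ
  | [] => D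
  | P :: Ps => DATE.residual2List (D.residual2 P) Ps

namespace DATE

variable {Q E Θ : Type*}

lemma approxRun_mono (X : DATE Q E Θ) :
    ∀ (t : List E) {S S' : Set Q}, S ⊆ S' → X.approxRun S t ⊆ X.approxRun S' t := by
  intro t
  induction t with
  | nil => intro S S' h; exact h
  | cons e t ih =>
      intro S S' h
      exact ih (fun q hq => by obtain ⟨p, hp, hs⟩ := hq; exact ⟨p, h hp, hs⟩)

lemma approxRun_append (X : DATE Q E Θ) (S : Set Q) (t₁ t₂ : List E) :
    X.approxRun S (t₁ ++ t₂) = X.approxRun (X.approxRun S t₁) t₂ := by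
  simp [approxRun, List.foldl_append]

lemma step_approx (X : DATE Q E Θ) (s : Q × Θ) (e : E) :
    X.ApproxStep s.1 e (X.step s e).1 := by
  unfold step
  split
  · next h =>
      obtain ⟨hmem, hsrc, hev, hcond⟩ := h.choose_spec
      exact Or.inl ⟨h.choose, hmem, hsrc, hev, rfl, fun hall => by
        have := hall s.2; rw [hcond] at this; exact Bool.noConfusion this⟩
  · next h =>
      refine Or.inr ⟨rfl, fun ⟨d, hd, hsrc, hev, _, hall⟩ => h ⟨d, hd, hsrc, hev, hall s.2⟩⟩

lemma run_mem_approx (X : DATE Q E Θ) :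
    ∀ (t : List E) (s : Q × Θ), (X.run s t).1 ∈ X.approxRun {s.1} t := by
  intro t
  induction t with
  | nil => intro s; rfl
  | cons e t ih =>
      intro s
      have h1 : (X.run (X.step s e) t).1 ∈ X.approxRun {(X.step s e).1} t := ih _
      have h2 : {(X.step s e).1} ⊆ X.approxSet {s.1} e := by
        intro q hq; rw [Set.mem_singleton_iff] at hq; subst hq
        exact ⟨s.1, rfl, X.step_approx s e⟩
      exact X.approxRun_mono t h2 h1

lemma reach_refl (X : DATE Q E Θ) (q : Q) : X.Reach q q := ⟨[], rfl⟩

lemma reach_trans (X : DATE Q E Θ) {q q' q'' : Q}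
    (h1 : X.Reach q q') (h2 : X.Reach q' q'') : X.Reach q q'' := by
  obtain ⟨t₁, h1⟩ := h1
  obtain ⟨t₂, h2⟩ := h2
  refine ⟨t₁ ++ t₂, ?_⟩
  rw [show X.approxRun {q} (t₁ ++ t₂) = X.approxRun (X.approxRun {q} t₁) t₂ from
    X.approxRun_append _ _ _]
  exact X.approxRun_mono t₂ (by intro p hp; rw [Set.mem_singleton_iff] at hp; subst hp; exact h1) h2

lemma reach_step (X : DATE Q E Θ) {q q' q'' : Q} {e : E}
    (h1 : X.Reach q q') (h2 : X.ApproxStep q' e q'') : X.Reach q q'' :=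
  X.reach_trans h1 ⟨[e], ⟨q', rfl, h2⟩⟩

lemma reach_of_sub {X Y : DATE Q E Θ} (hsub : Y.delta ⊆ X.delta) {q q' : Q}
    (h : Y.Reach q q') : X.Reach q q' := by
  obtain ⟨t, ht⟩ := h
  suffices H : ∀ (t : List E) (S : Set Q), (∀ p ∈ S, X.Reach q p) →
      ∀ p ∈ Y.approxRun S t, X.Reach q p by
    exact H t {q} (fun p hp => by rw [Set.mem_singleton_iff] at hp; subst hp; exact X.reach_refl p) q' ht
  intro t
  induction t with
  | nil => intro S hS p hp; exact hS p hp
  | cons e t ih =>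
      intro S hS p hp
      refine ih _ ?_ p hp
      rintro r ⟨s, hs, hstep⟩
      rcases hstep with ⟨d, hd, hsrc, hev, htgt, hcf⟩ | ⟨heq, _⟩
      · exact X.reach_step (hS s hs) (Or.inl ⟨d, hsub hd, hsrc, hev, htgt, hcf⟩)
      · rw [heq]; exact hS s hs

lemma no_bad_run (X : DATE Q E Θ) {q : Q}
    (h : ¬ ∃ b ∈ X.bad, X.Reach q b) (t : List E) (θ : Θ) :
    (X.run (q, θ) t).1 ∉ X.bad := by
  intro hbad
  exact h ⟨_, hbad, ⟨t, X.run_mem_approx t (q, θ)⟩⟩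

/-- Step-equality for a sub-DATE that keeps all fireable transitions. -/
lemma step_eq_of_keep {X Y : DATE Q E Θ} (hdet : X.Deterministic)
    (hsub : Y.delta ⊆ X.delta) (s : Q × Θ) (e : E)
    (hkeep : ∀ d ∈ X.delta, d.src = s.1 → d.ev = e → d.cond s.2 = true → d ∈ Y.delta) :
    Y.step s e = X.step s e := by
  by_cases hX : ∃ d ∈ X.delta, d.src = s.1 ∧ d.ev = e ∧ d.cond s.2 = true
  · have hY : ∃ d ∈ Y.delta, d.src = s.1 ∧ d.ev = e ∧ d.cond s.2 = true := by
      obtain ⟨d, hd, h1, h2, h3⟩ := hX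
      exact ⟨d, hkeep d hd h1 h2 h3, h1, h2, h3⟩
    rw [step, step, dif_pos hX, dif_pos hY]
    obtain ⟨hmX, hsX, heX, hcX⟩ := hX.choose_spec
    obtain ⟨hmY, hsY, heY, hcY⟩ := hY.choose_spec
    have : hY.choose = hX.choose := by
      by_contra hne
      exact hdet hY.choose (hsub hmY) hX.choose hmX (hsY.trans hsX.symm)
        (heY.trans heX.symm) hne s.2 ⟨hcY, hcX⟩
    rw [this]
  · have hY : ¬ ∃ d ∈ Y.delta, d.src = s.1 ∧ d.ev = e ∧ d.cond s.2 = true := by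
      rintro ⟨d, hd, h1, h2, h3⟩; exact hX ⟨d, hsub hd, h1, h2, h3⟩
    rw [step, step, dif_neg hX, dif_neg hY]

lemma reachReduce_step_eq {X : DATE Q E Θ} (hdet : X.Deterministic)
    {q : Q} (hq : X.BadAfter q) (θ : Θ) (e : E) :
    X.reachReduce.step (q, θ) e = X.step (q, θ) e := by
  refine step_eq_of_keep hdet (fun d (hd : d ∈ X.reachReduce.delta) => hd.1) (q, θ) e ?_
  intro d hd hsrc hev hcond
  refine ⟨hd, ?_, ?_⟩
  · rw [hsrc]; exact Or.inl hq
  · -- target is useful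
    have happrox : X.ApproxStep q d.ev d.tgt :=
      Or.inl ⟨d, hd, hsrc, rfl, rfl, fun hall => by
        have := hall θ; rw [hcond] at this; exact Bool.noConfusion this⟩
    have htreach : X.Reach X.init d.tgt := X.reach_step hq.1 happrox
    by_cases hc : ∃ b ∈ X.bad, X.Reach d.tgt b
    · exact Or.inl ⟨htreach, hc⟩
    · exact Or.inr ⟨fun hBA => hc hBA.2, q, d.ev, hq, happrox⟩

lemma forall_prefix_cons {e : E} {t : List E} {p : List E → Prop} :
    (∀ pre, pre <+: (e :: t) → p pre) ↔ p [] ∧ ∀ pre, pre <+: t → p (e :: pre) := by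
  constructor
  · intro h
    exact ⟨h [] (List.nil_prefix), fun pre hpre =>
      h (e :: pre) (List.cons_prefix_cons.mpr ⟨rfl, hpre⟩)⟩
  · rintro ⟨h0, h1⟩ pre hpre
    match pre, hpre with
    | [], _ => exact h0
    | a :: pre', hpre =>
        obtain ⟨rfl, hp⟩ := List.cons_prefix_cons.mp hpre
        exact h1 pre' hp

lemma reachReduce_sat_from {X : DATE Q E Θ} (hdet : X.Deterministic) :
    ∀ (t : List E) (s : Q × Θ), X.Reach X.init s.1 →
      ((∀ pre, pre <+: t → (X.reachReduce.run s pre).1 ∉ X.bad) ↔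
        (∀ pre, pre <+: t → (X.run s pre).1 ∉ X.bad)) := by
  intro t
  induction t with
  | nil =>
      intro s _
      constructor
      · intro h pre hpre; rw [List.prefix_nil.mp hpre]
        exact h [] (List.nil_prefix)
      · intro h pre hpre; rw [List.prefix_nil.mp hpre]
        exact h [] (List.nil_prefix)
  | cons e t ih =>
      intro s hreach
      by_cases hb : ∃ b ∈ X.bad, X.Reach s.1 b
      · -- BadAfter: steps coincide
        have hBA : X.BadAfter s.1 := ⟨hreach, hb⟩
        have hstep : X.reachReduce.step s e = X.step s e := by
          have := reachReduce_step_eq hdet hBA s.2 e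
          rwa [Prod.mk.eta] at this
        have hrun : ∀ pre, X.reachReduce.run s (e :: pre) =
            X.reachReduce.run (X.step s e) pre := by
          intro pre; show X.reachReduce.run (X.reachReduce.step s e) pre = _
          rw [hstep]
        have hrunX : ∀ pre, X.run s (e :: pre) = X.run (X.step s e) pre :=
          fun pre => rfl
        have hreach' : X.Reach X.init (X.step s e).1 :=
          X.reach_step hreach (X.step_approx s e)
        rw [forall_prefix_cons, forall_prefix_cons]
        constructor
        · rintro ⟨h0, h1⟩
          refine ⟨h0, ?_⟩
          intro pre hpre
          rw [hrunX pre]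
          exact (ih (X.step s e) hreach').mp
            (fun pr hpr => by rw [← hrun pr]; exact h1 pr hpr) pre hpre
        · rintro ⟨h0, h1⟩
          refine ⟨h0, ?_⟩
          intro pre hpre
          rw [hrun pre]
          exact (ih (X.step s e) hreach').mpr
            (fun pr hpr => by rw [← hrunX pr]; exact h1 pr hpr) pre hpre
      · -- cannot reach bad: both sides hold unconditionally
        have hXside : ∀ pre, pre <+: (e :: t) → (X.run s pre).1 ∉ X.bad := by
          intro pre _
          have : X.run s pre = X.run (s.1, s.2) pre := by rw [Prod.mk.eta]
          rw [this]
          exact X.no_bad_run hb pre s.2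
        have hYside : ∀ pre, pre <+: (e :: t) → (X.reachReduce.run s pre).1 ∉ X.bad := by
          intro pre _ hbad
          have hmem := X.reachReduce.run_mem_approx pre s
          have : X.Reach s.1 (X.reachReduce.run s pre).1 :=
            reach_of_sub (fun d (hd : d ∈ X.reachReduce.delta) => hd.1) ⟨pre, hmem⟩
          exact hb ⟨_, hbad, this⟩
        exact ⟨fun _ => hXside, fun _ => hYside⟩

lemma reachReduce_sat {X : DATE Q E Θ} (hdet : X.Deterministic) (t : List E) :
    Sat t X.reachReduce ↔ Sat t X :=
  reachReduce_sat_from hdet t (X.init, X.th0) (X.reach_refl _)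

lemma alphaRestrict_run {D : DATE Q E Θ} (hdet : D.Deterministic) {A : Set E} :
    ∀ (t : List E), (∀ e ∈ t, e ∈ A) → ∀ s : Q × Θ,
      (D.alphaRestrict A).run s t = D.run s t := by
  intro t
  induction t with
  | nil => intro _ s; rfl
  | cons e t ih =>
      intro hA s
      have hstep : (D.alphaRestrict A).step s e = D.step s e := by
        refine step_eq_of_keep hdet (fun d (hd : d ∈ (D.alphaRestrict A).delta) => hd.1) s e ?_
        intro d hd _ hev _
        exact ⟨hd, by show d.ev ∈ A; rw [hev]; exact hA e List.mem_cons_self⟩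
      show (D.alphaRestrict A).run ((D.alphaRestrict A).step s e) t = D.run (D.step s e) t
      rw [hstep]
      exact ih (fun e' he' => hA e' (List.mem_cons_of_mem _ he')) _

lemma alphaRestrict_sat {D : DATE Q E Θ} (hdet : D.Deterministic) {A : Set E}
    {t : List E} (hA : ∀ e ∈ t, e ∈ A) :
    Sat t (D.alphaRestrict A) ↔ Sat t D := by
  unfold Sat
  constructor <;> intro h pre hpre <;>
    have hApre : ∀ e ∈ pre, e ∈ A := fun e he => hA e (hpre.subset he)
  · have := h pre hpre
    rwa [alphaRestrict_run hdet pre hApre] at this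
  · have := h pre hpre
    rwa [← alphaRestrict_run hdet pre hApre] at this

lemma deterministic_of_sub {X Y : DATE Q E Θ} (hdet : X.Deterministic)
    (hsub : Y.delta ⊆ X.delta) : Y.Deterministic :=
  fun d hd d' hd' h1 h2 h3 θ => hdet d (hsub hd) d' (hsub hd') h1 h2 h3 θ

end DATE

/-- The object-specific residual
`residual₁(D, oid) = reach(D ↾ Σ(P^S_Σ ⇓ oid))` is equivalent to `D` with
respect to the ground traces of `oid` in the program. -/
theorem residual1_equiv {α Q E Θ : Type*} (D : DATE Q E Θ)
    (hdet : D.Deterministic) (P : SProg α E) (oid : α) :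
    DATE.EquivOn (P.projId oid)
      ((D.alphaRestrict (DATE.eventsOf (P.projId oid))).reachReduce) D := by
  intro t ht
  have hA : ∀ e ∈ t, e ∈ DATE.eventsOf (P.projId oid) := fun e he => ⟨t, ht, he⟩
  have hdetX : (D.alphaRestrict (DATE.eventsOf (P.projId oid))).Deterministic :=
    DATE.deterministic_of_sub hdet
      (fun d (hd : d ∈ (D.alphaRestrict (DATE.eventsOf (P.projId oid))).delta) => hd.1)
  rw [DATE.reachReduce_sat hdetX, DATE.alphaRestrict_sat hdet hA]
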